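/- If G is strictly unbalanced (neither balanced nor antibalanced) and connected, then ρ(P_sym) < 1 and consequently P^t → 0 as t → ∞; i.e., for any initial vector x(0), the random walk state x(0)^T P^t converges to the zero vector. -/

import Mathlib

open Filter Matrix

lemma aux_path {n : ℕ} (B : Matrix (Fin n) (Fin n) ℝ) (f : Fin n → ℝ)
    (h : ∀ i j, B i j ≠ 0 → f i = f j) :
    ∀ (m : ℕ) (i j : Fin n), (B ^ m) i j ≠ 0 → f i = f j := by
  intro m
  induction m with
  | zero =>
    intro i j hij
    rw [pow_zero] at hij
    by_cases hij' : i = j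
    · rw [hij']
    · simp [Matrix.one_apply, hij'] at hij
  | succ m ih =>
    intro i j hij
    rw [pow_succ, Matrix.mul_apply] at hij
    obtain ⟨k, -, hk⟩ := Finset.exists_ne_zero_of_sum_ne_zero hij
    exact (ih i k (left_ne_zero_of_mul hk)).trans (h k j (right_ne_zero_of_mul hk))

lemma eig_bound {n : ℕ} (W : Matrix (Fin n) (Fin n) ℝ)
    (hW : W.IsSymm)
    (d : Fin n → ℝ) (hdef : ∀ i, d i = ∑ k, |W i k|) (hd : ∀ i, 0 < d i)
    (hconn : ∀ i j : Fin n, ∃ m : ℕ, ((Matrix.of fun a b => |W a b|) ^ m) i j ≠ 0)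
    (hnotbal : ¬ ∃ σ : Fin n → ℝ, (∀ i, σ i = 1 ∨ σ i = -1) ∧
      ∀ i j, W i j = σ i * |W i j| * σ j)
    (hnotanti : ¬ ∃ σ : Fin n → ℝ, (∀ i, σ i = 1 ∨ σ i = -1) ∧
      ∀ i j, W i j = -(σ i * |W i j| * σ j))
    (μ : ℝ) (v : Fin n → ℝ) (hv : v ≠ 0)
    (heig : (Matrix.of fun i j => W i j / (Real.sqrt (d i) * Real.sqrt (d j))) *ᵥ v = μ • v) :
    |μ| < 1 := by
  have hWsymm : ∀ i j, W j i = W i j := fun i j => congrFun (congrFun hW i) j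
  have hsd : ∀ i, 0 < Real.sqrt (d i) := fun i => Real.sqrt_pos.2 (hd i)
  set y : Fin n → ℝ := fun i => v i / Real.sqrt (d i) with hy
  have hvy : ∀ i, v i = Real.sqrt (d i) * y i := by
    intro i; rw [hy]
    exact (mul_div_cancel₀ _ (hsd i).ne').symm
  set S : ℝ := ∑ i, d i * (y i) ^ 2 with hSdef
  -- positivity of S
  obtain ⟨i0, hi0'⟩ := Function.ne_iff.1 hv
  have hi0 : v i0 ≠ 0 := by simpa using hi0'
  have hyi0 : y i0 ≠ 0 := by
    rw [hy]; exact div_ne_zero hi0 (hsd i0).ne'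
  have hy2 : 0 < y i0 ^ 2 := by rcases hyi0.lt_or_gt with h | h <;> nlinarith
  have hSpos : 0 < S := by
    apply Finset.sum_pos' (fun i _ => mul_nonneg (hd i).le (sq_nonneg _))
    exact ⟨i0, Finset.mem_univ _, mul_pos (hd i0) hy2⟩
  -- main identity: ∑ p, W p.1 p.2 * y p.1 * y p.2 = μ * S
  have hmulvec : ∀ i, ∑ j, W i j / (Real.sqrt (d i) * Real.sqrt (d j)) * v j = μ * v i := by
    intro i
    have := congrFun heig i
    simpa [Matrix.mulVec, dotProduct] using this
  have hE : ∑ p : Fin n × Fin n, W p.1 p.2 * y p.1 * y p.2 = μ * S := by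
    rw [Fintype.sum_prod_type]
    have : ∀ i, ∑ j, W i j * y i * y j
        = y i * Real.sqrt (d i) * (∑ j, W i j / (Real.sqrt (d i) * Real.sqrt (d j)) * v j) := by
      intro i
      rw [Finset.mul_sum]
      apply Finset.sum_congr rfl
      intro j _
      rw [hvy j]
      field_simp [(hsd i).ne', (hsd j).ne']
    rw [Finset.sum_congr rfl (fun i _ => this i)]
    have : ∀ i, y i * Real.sqrt (d i) *
        (∑ j, W i j / (Real.sqrt (d i) * Real.sqrt (d j)) * v j) = μ * (d i * y i ^ 2) := by
      intro i
      rw [hmulvec i, hvy i]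
      have h2 : Real.sqrt (d i) * Real.sqrt (d i) = d i := Real.mul_self_sqrt (hd i).le
      linear_combination μ * y i ^ 2 * h2
    rw [Finset.sum_congr rfl (fun i _ => this i), hSdef, Finset.mul_sum]
  -- T ≤ U = S termwise
  have hterm : ∀ p : Fin n × Fin n,
      |W p.1 p.2| * |y p.1| * |y p.2| ≤ |W p.1 p.2| * ((y p.1) ^ 2 + (y p.2) ^ 2) / 2 := by
    intro p
    have h1 : |y p.1| * |y p.2| ≤ ((y p.1) ^ 2 + (y p.2) ^ 2) / 2 := by
      nlinarith [sq_nonneg (|y p.1| - |y p.2|), sq_abs (y p.1), sq_abs (y p.2)]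
    have h0 : (0:ℝ) ≤ |W p.1 p.2| := abs_nonneg _
    nlinarith
  have hU : ∑ p : Fin n × Fin n, |W p.1 p.2| * ((y p.1) ^ 2 + (y p.2) ^ 2) / 2 = S := by
    have e1 : ∑ p : Fin n × Fin n, |W p.1 p.2| * (y p.1) ^ 2 = S := by
      simp only [Fintype.sum_prod_type, hSdef]
      apply Finset.sum_congr rfl
      intro i _
      rw [← Finset.sum_mul, ← hdef i]
    have e2 : ∑ p : Fin n × Fin n, |W p.1 p.2| * (y p.2) ^ 2 = S := by
      simp only [Fintype.sum_prod_type_right, hSdef]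
      apply Finset.sum_congr rfl
      intro j _
      have hrw : (∑ i, |W i j| * y j ^ 2) = ∑ i, |W j i| * y j ^ 2 :=
        Finset.sum_congr rfl (fun i _ => by rw [hWsymm i j])
      rw [hrw, ← Finset.sum_mul, ← hdef j]
    have : ∑ p : Fin n × Fin n, |W p.1 p.2| * ((y p.1) ^ 2 + (y p.2) ^ 2) / 2
        = ((∑ p : Fin n × Fin n, |W p.1 p.2| * (y p.1) ^ 2)
          + ∑ p : Fin n × Fin n, |W p.1 p.2| * (y p.2) ^ 2) / 2 := by
      rw [← Finset.sum_add_distrib, ← Finset.sum_div]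
      apply congrArg (· / 2)
      apply Finset.sum_congr rfl
      intro p _; ring
    rw [this, e1, e2]; ring
  have hTU : ∑ p : Fin n × Fin n, |W p.1 p.2| * |y p.1| * |y p.2| ≤ S := by
    rw [← hU]
    exact Finset.sum_le_sum (fun p _ => hterm p)
  have habsE : |μ| * S ≤ ∑ p : Fin n × Fin n, |W p.1 p.2| * |y p.1| * |y p.2| := by
    have h1 : |μ * S| = |μ| * S := by rw [abs_mul, abs_of_pos hSpos]
    rw [← h1, ← hE]
    calc |∑ p : Fin n × Fin n, W p.1 p.2 * y p.1 * y p.2|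
        ≤ ∑ p : Fin n × Fin n, |W p.1 p.2 * y p.1 * y p.2| := Finset.abs_sum_le_sum_abs _ _
      _ = ∑ p : Fin n × Fin n, |W p.1 p.2| * |y p.1| * |y p.2| := by
          apply Finset.sum_congr rfl; intro p _; rw [abs_mul, abs_mul]
  have hle : |μ| ≤ 1 := by
    have := le_trans habsE hTU
    nlinarith
  -- now suppose |μ| = 1
  by_contra hcon
  have habs1 : |μ| = 1 := le_antisymm hle (not_lt.1 hcon)
  have hTS : ∑ p : Fin n × Fin n, |W p.1 p.2| * |y p.1| * |y p.2| = S := by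
    have := habsE; rw [habs1, one_mul] at this
    linarith
  -- termwise equality in T ≤ U
  have htermeq : ∀ p : Fin n × Fin n,
      |W p.1 p.2| * |y p.1| * |y p.2| = |W p.1 p.2| * ((y p.1) ^ 2 + (y p.2) ^ 2) / 2 := by
    have hsum : ∑ p : Fin n × Fin n, |W p.1 p.2| * |y p.1| * |y p.2|
        = ∑ p : Fin n × Fin n, |W p.1 p.2| * ((y p.1) ^ 2 + (y p.2) ^ 2) / 2 := by
      rw [hTS, hU]
    intro p
    exact (Finset.sum_eq_sum_iff_of_le (fun q _ => hterm q)).1 hsum p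
      (Finset.mem_univ p)
  have hneq : ∀ i j, W i j ≠ 0 → |y i| = |y j| := by
    intro i j hij
    have h := htermeq (i, j)
    simp only at h
    have hW0 : 0 < |W i j| := abs_pos.2 hij
    have h2 : (|y i| - |y j|) ^ 2 = 0 := by
      have : |y i| * |y j| = ((y i) ^ 2 + (y j) ^ 2) / 2 := by
        field_simp at h ⊢
        nlinarith
      nlinarith [sq_abs (y i), sq_abs (y j)]
    have := pow_eq_zero_iff (n := 2) (by norm_num) |>.1 h2
    linarith [abs_nonneg (y i), abs_nonneg (y j), sub_eq_zero.1 this]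
  -- all |y i| equal
  have hally : ∀ i j, |y i| = |y j| := by
    intro i j
    obtain ⟨m, hm⟩ := hconn i j
    exact aux_path (Matrix.of fun a b => |W a b|) (fun i => |y i|)
      (fun a b hab => hneq a b (fun h0 => hab (by simp [h0]))) m i j hm
  set c : ℝ := |y i0| with hc
  have hcpos : 0 < c := abs_pos.2 hyi0
  have hyc : ∀ i, |y i| = c := fun i => hally i i0
  set σ : Fin n → ℝ := fun i => y i / c with hσ
  have hσpm : ∀ i, σ i = 1 ∨ σ i = -1 := by
    intro i
    have : |σ i| = 1 := by
      rw [hσ]; rw [abs_div, hyc i, abs_of_pos hcpos, div_self hcpos.ne']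
    exact (abs_eq (by norm_num)).1 this
  have hycσ : ∀ i, y i = c * σ i := by
    intro i; rw [hσ]; field_simp
  have hσsq : ∀ i, σ i * σ i = 1 := by
    intro i; rcases hσpm i with h | h <;> rw [h] <;> norm_num
  -- μ = 1 or μ = -1
  rcases (abs_eq (by norm_num : (0:ℝ) ≤ 1)).1 habs1 with hμ1 | hμ1
  · -- balanced case
    apply hnotbal
    refine ⟨σ, hσpm, ?_⟩
    have hsum : ∑ p : Fin n × Fin n, W p.1 p.2 * y p.1 * y p.2
        = ∑ p : Fin n × Fin n, |W p.1 p.2| * |y p.1| * |y p.2| := by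
      rw [hE, hμ1, one_mul, hTS]
    have hpt : ∀ p : Fin n × Fin n, W p.1 p.2 * y p.1 * y p.2
        = |W p.1 p.2| * |y p.1| * |y p.2| := by
      have hle' : ∀ p : Fin n × Fin n, W p.1 p.2 * y p.1 * y p.2
          ≤ |W p.1 p.2| * |y p.1| * |y p.2| := by
        intro p
        calc W p.1 p.2 * y p.1 * y p.2 ≤ |W p.1 p.2 * y p.1 * y p.2| := le_abs_self _
          _ = |W p.1 p.2| * |y p.1| * |y p.2| := by rw [abs_mul, abs_mul]
      exact fun p => (Finset.sum_eq_sum_iff_of_le (fun q _ => hle' q)).1 hsum p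
        (Finset.mem_univ p)
    intro i j
    have h := hpt (i, j)
    simp only at h
    rw [hyc i, hyc j, hycσ i, hycσ j] at h
    have h' : W i j * σ i * σ j = |W i j| := by
      have hc2 : (0:ℝ) < c * c := mul_pos hcpos hcpos
      have h2 : (W i j * σ i * σ j) * (c * c) = |W i j| * (c * c) := by linear_combination h
      exact mul_right_cancel₀ hc2.ne' h2
    calc W i j = W i j * (σ i * σ i) * (σ j * σ j) := by rw [hσsq i, hσsq j]; ring
      _ = σ i * (W i j * σ i * σ j) * σ j := by ring
      _ = σ i * |W i j| * σ j := by rw [h']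
  · -- antibalanced case
    apply hnotanti
    refine ⟨σ, hσpm, ?_⟩
    have hsum : ∑ p : Fin n × Fin n, -(W p.1 p.2 * y p.1 * y p.2)
        = ∑ p : Fin n × Fin n, |W p.1 p.2| * |y p.1| * |y p.2| := by
      rw [Finset.sum_neg_distrib, hE, hμ1, hTS]; ring
    have hpt : ∀ p : Fin n × Fin n, -(W p.1 p.2 * y p.1 * y p.2)
        = |W p.1 p.2| * |y p.1| * |y p.2| := by
      have hle' : ∀ p : Fin n × Fin n, -(W p.1 p.2 * y p.1 * y p.2)
          ≤ |W p.1 p.2| * |y p.1| * |y p.2| := by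
        intro p
        calc -(W p.1 p.2 * y p.1 * y p.2) ≤ |W p.1 p.2 * y p.1 * y p.2| := neg_le_abs _
          _ = |W p.1 p.2| * |y p.1| * |y p.2| := by rw [abs_mul, abs_mul]
      exact fun p => (Finset.sum_eq_sum_iff_of_le (fun q _ => hle' q)).1 hsum p
        (Finset.mem_univ p)
    intro i j
    have h := hpt (i, j)
    simp only at h
    rw [hyc i, hyc j, hycσ i, hycσ j] at h
    have h' : W i j * σ i * σ j = -|W i j| := by
      have hc2 : (0:ℝ) < c * c := mul_pos hcpos hcpos
      have h2 : (W i j * σ i * σ j) * (c * c) = (-|W i j|) * (c * c) := by linear_combination -h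
      exact mul_right_cancel₀ hc2.ne' h2
    calc W i j = W i j * (σ i * σ i) * (σ j * σ j) := by rw [hσsq i, hσsq j]; ring
      _ = σ i * (W i j * σ i * σ j) * σ j := by ring
      _ = σ i * (-|W i j|) * σ j := by rw [h']
      _ = -(σ i * |W i j| * σ j) := by ring

/-- The spectral radius of a real matrix. -/
noncomputable def specRad {n : ℕ} (M : Matrix (Fin n) (Fin n) ℝ) : ℝ :=
  sSup (abs '' spectrum ℝ M)

/-- If a connected signed graph is strictly unbalanced (neither balanced nor
antibalanced), then ρ(P_sym) < 1 and the random walk state x(0)ᵀ P^t converges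
to the zero vector. -/
theorem strictly_unbalanced_walk_to_zero {n : ℕ} (W : Matrix (Fin n) (Fin n) ℝ)
    (hW : W.IsSymm)
    (d : Fin n → ℝ) (hdef : ∀ i, d i = ∑ k, |W i k|) (hd : ∀ i, 0 < d i)
    (hconn : ∀ i j : Fin n, ∃ m : ℕ, ((Matrix.of fun a b => |W a b|) ^ m) i j ≠ 0)
    (hnotbal : ¬ ∃ σ : Fin n → ℝ, (∀ i, σ i = 1 ∨ σ i = -1) ∧
      ∀ i j, W i j = σ i * |W i j| * σ j)
    (hnotanti : ¬ ∃ σ : Fin n → ℝ, (∀ i, σ i = 1 ∨ σ i = -1) ∧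
      ∀ i j, W i j = -(σ i * |W i j| * σ j)) :
    specRad (Matrix.of fun i j => W i j / (Real.sqrt (d i) * Real.sqrt (d j))) < 1 ∧
    Tendsto (fun t : ℕ => (Matrix.of fun i j => W i j / d i) ^ t) atTop (nhds 0) ∧
    ∀ x0 : Fin n → ℝ,
      Tendsto (fun t : ℕ => Matrix.vecMul x0 ((Matrix.of fun i j => W i j / d i) ^ t))
        atTop (nhds 0) := by
  set M : Matrix (Fin n) (Fin n) ℝ :=
    Matrix.of fun i j => W i j / (Real.sqrt (d i) * Real.sqrt (d j)) with hM
  set P : Matrix (Fin n) (Fin n) ℝ := Matrix.of fun i j => W i j / d i with hP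
  have hsd : ∀ i, 0 < Real.sqrt (d i) := fun i => Real.sqrt_pos.2 (hd i)
  have key : ∀ (μ : ℝ) (v : Fin n → ℝ), v ≠ 0 → M *ᵥ v = μ • v → |μ| < 1 :=
    fun μ v hv hveq => eig_bound W hW d hdef hd hconn hnotbal hnotanti μ v hv hveq
  -- every spectrum element has an eigenvector
  have hspec : ∀ lam ∈ spectrum ℝ M, |lam| < 1 := by
    intro lam hl
    rw [spectrum.mem_iff] at hl
    have hdet : (algebraMap ℝ (Matrix (Fin n) (Fin n) ℝ) lam - M).det = 0 := by
      by_contra h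
      exact hl ((Matrix.isUnit_iff_isUnit_det _).2 (Ne.isUnit h))
    obtain ⟨v, hv0, hveq⟩ := (Matrix.exists_mulVec_eq_zero_iff).2 hdet
    apply key lam v hv0
    have halg : algebraMap ℝ (Matrix (Fin n) (Fin n) ℝ) lam = lam • (1 : Matrix (Fin n) (Fin n) ℝ) :=
      Algebra.algebraMap_eq_smul_one lam
    rw [halg, Matrix.sub_mulVec, Matrix.smul_mulVec, Matrix.one_mulVec] at hveq
    exact (sub_eq_zero.1 hveq).symm
  -- Part 1: specRad M < 1
  have part1 : specRad M < 1 := by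
    rw [specRad]
    rcases (abs '' spectrum ℝ M).eq_empty_or_nonempty with he | hne
    · rw [he, Real.sSup_empty]; norm_num
    · have hfin : (abs '' spectrum ℝ M).Finite := (M.finite_spectrum).image _
      have hmem := hne.csSup_mem hfin
      obtain ⟨lam, hlam, heq⟩ := hmem
      rw [← heq]
      exact hspec lam hlam
  -- Hermitian structure
  have hH : M.IsHermitian := by
    rw [Matrix.IsHermitian]
    ext i j
    simp only [Matrix.conjTranspose_apply, hM, Matrix.of_apply, star_trivial]
    rw [hW.apply i j]
    ring_nf
  set U : Matrix (Fin n) (Fin n) ℝ := (hH.eigenvectorUnitary : Matrix (Fin n) (Fin n) ℝ) with hU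
  set μ : Fin n → ℝ := hH.eigenvalues with hμ
  have hμlt : ∀ i, |μ i| < 1 := by
    intro i
    apply key (μ i) (⇑(hH.eigenvectorBasis i))
    · intro h0
      exact hH.eigenvectorBasis.orthonormal.ne_zero i (by ext j; exact congrFun h0 j)
    · exact hH.mulVec_eigenvectorBasis i
  have hUU : U * star U = 1 := Matrix.mem_unitaryGroup_iff.mp (Matrix.IsHermitian.eigenvectorUnitary hH).2
  have hUU' : star U * U = 1 := Matrix.mem_unitaryGroup_iff'.mp (Matrix.IsHermitian.eigenvectorUnitary hH).2
  have hst : M = U * Matrix.diagonal μ * star U := by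
    have := hH.spectral_theorem
    rw [Unitary.conjStarAlgAut_apply] at this
    convert this using 2 <;> rfl
  have hMpow : ∀ t : ℕ, M ^ t = U * (Matrix.diagonal μ) ^ t * star U := by
    intro t
    induction t with
    | zero => rw [pow_zero, pow_zero, mul_one, hUU]
    | succ t ih =>
      rw [pow_succ, ih, hst, pow_succ]
      calc U * Matrix.diagonal μ ^ t * star U * (U * Matrix.diagonal μ * star U)
          = U * Matrix.diagonal μ ^ t * (star U * U) * Matrix.diagonal μ * star U := by
            simp only [Matrix.mul_assoc]
        _ = U * (Matrix.diagonal μ ^ t * Matrix.diagonal μ) * star U := by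
            rw [hUU', Matrix.mul_one]; simp only [Matrix.mul_assoc]
  have hMentry : ∀ i j : Fin n, Tendsto (fun t : ℕ => (M ^ t) i j) atTop (nhds 0) := by
    intro i j
    have hform : ∀ t : ℕ, (M ^ t) i j = ∑ k, U i k * μ k ^ t * (star U) k j := by
      intro t
      rw [hMpow t, Matrix.diagonal_pow, Matrix.mul_apply]
      apply Finset.sum_congr rfl
      intro k _
      rw [Matrix.mul_diagonal]
      rfl
    simp only [hform]
    have h0 : (0:ℝ) = ∑ k : Fin n, (0:ℝ) := by simp
    rw [h0]
    apply tendsto_finset_sum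
    intro k _
    have hk : Tendsto (fun t : ℕ => μ k ^ t) atTop (nhds 0) :=
      tendsto_pow_atTop_nhds_zero_of_abs_lt_one (hμlt k)
    have := (hk.const_mul (U i k)).mul_const ((star U) k j)
    simpa [mul_comm, mul_assoc, mul_left_comm] using this
  -- relate P to M
  set E : Matrix (Fin n) (Fin n) ℝ := Matrix.diagonal (fun i => Real.sqrt (d i)) with hE
  set F : Matrix (Fin n) (Fin n) ℝ := Matrix.diagonal (fun i => (Real.sqrt (d i))⁻¹) with hF
  have hEF : E * F = 1 := by
    rw [hE, hF, Matrix.diagonal_mul_diagonal]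
    have h1 : (fun i => Real.sqrt (d i) * (Real.sqrt (d i))⁻¹) = fun _ : Fin n => (1:ℝ) :=
      funext fun i => mul_inv_cancel₀ (hsd i).ne'
    rw [h1, Matrix.diagonal_one]
  have hFE : F * E = 1 := by
    rw [hE, hF, Matrix.diagonal_mul_diagonal]
    have h1 : (fun i => (Real.sqrt (d i))⁻¹ * Real.sqrt (d i)) = fun _ : Fin n => (1:ℝ) :=
      funext fun i => inv_mul_cancel₀ (hsd i).ne'
    rw [h1, Matrix.diagonal_one]
  have hPFME : P = F * M * E := by
    ext i j
    rw [hP]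
    simp only [Matrix.of_apply]
    rw [hF, hE, Matrix.mul_diagonal, Matrix.diagonal_mul]
    simp only [hM, Matrix.of_apply]
    rw [div_eq_iff (hd i).ne']
    have hdi : Real.sqrt (d i) * Real.sqrt (d i) = d i := Real.mul_self_sqrt (hd i).le
    field_simp [(hsd i).ne', (hsd j).ne']
    linear_combination (W i j) * hdi
  have hPpow : ∀ t : ℕ, P ^ t = F * M ^ t * E := by
    intro t
    induction t with
    | zero => rw [pow_zero, pow_zero, mul_one, hFE]
    | succ t ih =>
      rw [pow_succ, ih, pow_succ, hPFME]
      calc F * M ^ t * E * (F * M * E)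
          = F * M ^ t * (E * F) * M * E := by simp only [Matrix.mul_assoc]
        _ = F * (M ^ t * M) * E := by rw [hEF, Matrix.mul_one]; simp only [Matrix.mul_assoc]
  have hPentry : ∀ i j : Fin n, Tendsto (fun t : ℕ => (P ^ t) i j) atTop (nhds 0) := by
    intro i j
    have hform : ∀ t : ℕ, (P ^ t) i j = (Real.sqrt (d i))⁻¹ * (M ^ t) i j * Real.sqrt (d j) := by
      intro t
      rw [hPpow t, hF, hE, Matrix.mul_diagonal, Matrix.diagonal_mul]
    simp only [hform]
    have := ((hMentry i j).const_mul ((Real.sqrt (d i))⁻¹)).mul_const (Real.sqrt (d j))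
    simpa using this
  have part2 : Tendsto (fun t : ℕ => P ^ t) atTop (nhds 0) := by
    refine tendsto_pi_nhds.2 ?_
    intro i
    rw [tendsto_pi_nhds]
    intro j
    simpa using hPentry i j
  refine ⟨part1, part2, ?_⟩
  intro x0
  rw [tendsto_pi_nhds]
  intro j
  have hform : ∀ t : ℕ, Matrix.vecMul x0 (P ^ t) j = ∑ i, x0 i * (P ^ t) i j := by
    intro t
    rw [Matrix.vecMul, dotProduct]
  simp only [hform]
  have h0 : (0:ℝ) = ∑ i : Fin n, (0:ℝ) := by simp
  simp only [Pi.zero_apply]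
  rw [h0]
  apply tendsto_finset_sum
  intro i _
  simpa using (hPentry i j).const_mul (x0 i)
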